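/- For l₁ < l₂ let λ_p(l₁,l₂) be the principal eigenvalue of the linearized nonlocal operator L on [l₁,l₂]. Then λ_p(l₁,l₂) → γ_A as l₂ − l₁ → ∞ and λ_p(l₁,l₂) → γ_B as l₂ − l₁ → 0, where γ_A = (−a − b + √((a−b)² + 4H'(0)G'(0)))/2 and γ_B = (−a − d₁ − b − d₂ + √((a+d₁−b−d₂)² + 4H'(0)G'(0)))/2. In particular, γ_B ≤ λ_p(l₁,l₂) ≤ γ_A for all l₂ > l₁. -/
import Mathlib


open MeasureTheory Real Filter Topology Set

noncomputable section

/-- Condition (J): continuous, bounded, nonnegative, positive at 0, even, integrable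
with total integral 1. -/
def KernelCond (J : ℝ → ℝ) : Prop :=
  Continuous J ∧ (∃ C : ℝ, ∀ x : ℝ, J x ≤ C) ∧ (∀ x : ℝ, 0 ≤ J x) ∧ 0 < J 0 ∧
    (∀ x : ℝ, J (-x) = J x) ∧ Integrable J ∧ (∫ x : ℝ, J x) = 1

/-- Condition (H) on the reaction pair (H, G): both C² on [0,∞), vanishing at 0,
with positive first derivatives on [0,∞), negative second derivatives on (0,∞),
and G(H(ẑ)/a) < bẑ for some ẑ > 0. -/
def ReactionCond (a b : ℝ) (H G : ℝ → ℝ) : Prop :=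
  ContDiffOn ℝ 2 H (Ici 0) ∧ ContDiffOn ℝ 2 G (Ici 0) ∧
  H 0 = 0 ∧ G 0 = 0 ∧
  (∀ z ∈ Ici (0:ℝ), 0 < derivWithin H (Ici 0) z) ∧
  (∀ z ∈ Ici (0:ℝ), 0 < derivWithin G (Ici 0) z) ∧
  (∀ z ∈ Ioi (0:ℝ), derivWithin (derivWithin H (Ici 0)) (Ici 0) z < 0) ∧
  (∀ z ∈ Ioi (0:ℝ), derivWithin (derivWithin G (Ici 0)) (Ici 0) z < 0) ∧
  (∃ zh > 0, G (H zh / a) < b * zh)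

/-- The right-hand side of the free boundary equation in (1.1):
∫₀^{h(t)} ∫_{h(t)}^∞ [μ₁ J₁(x−y) u(t,x) + μ₂ J₂(x−y) v(t,x)] dy dx. -/
def frontSpeed (μ₁ μ₂ : ℝ) (J₁ J₂ : ℝ → ℝ) (u v : ℝ → ℝ → ℝ) (h : ℝ → ℝ) (t : ℝ) : ℝ :=
  ∫ x in (0:ℝ)..h t, ∫ y in Ioi (h t),
    (μ₁ * J₁ (x - y) * u t x + μ₂ * J₂ (x - y) * v t x)

/-- (u, v, h) is a solution of the free boundary problem (1.1). -/
def IsSolFB (d₁ d₂ a b μ₁ μ₂ h₀ : ℝ) (J₁ J₂ H G u₀ v₀ : ℝ → ℝ)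
    (u v : ℝ → ℝ → ℝ) (h : ℝ → ℝ) : Prop :=
  h 0 = h₀ ∧
  (∃ h' : ℝ → ℝ, ContinuousOn h' (Ici 0) ∧
    (∀ t ∈ Ici (0:ℝ), HasDerivWithinAt h (h' t) (Ici 0) t) ∧
    (∀ t ∈ Ioi (0:ℝ), h' t = frontSpeed μ₁ μ₂ J₁ J₂ u v h t)) ∧
  ContinuousOn (fun p : ℝ × ℝ => u p.1 p.2) {p : ℝ × ℝ | 0 ≤ p.1 ∧ p.2 ∈ Icc 0 (h p.1)} ∧
  ContinuousOn (fun p : ℝ × ℝ => v p.1 p.2) {p : ℝ × ℝ | 0 ≤ p.1 ∧ p.2 ∈ Icc 0 (h p.1)} ∧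
  (∀ t ∈ Ioi (0:ℝ), ∀ x ∈ Ico 0 (h t),
    HasDerivAt (fun s => u s x)
      (d₁ * (∫ y in (0:ℝ)..h t, J₁ (x - y) * u t y) - d₁ * u t x - a * u t x + H (v t x)) t ∧
    HasDerivAt (fun s => v s x)
      (d₂ * (∫ y in (0:ℝ)..h t, J₂ (x - y) * v t y) - d₂ * v t x - b * v t x + G (u t x)) t) ∧
  (∀ t ∈ Ioi (0:ℝ), u t (h t) = 0 ∧ v t (h t) = 0) ∧
  (∀ x ∈ Icc 0 h₀, u 0 x = u₀ x ∧ v 0 x = v₀ x)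

/-- First component of the linearized nonlocal operator L on [l₁, l₂]. -/
def opL1 (d₁ a H0 : ℝ) (J₁ : ℝ → ℝ) (l₁ l₂ : ℝ) (φ₁ φ₂ : ℝ → ℝ) (x : ℝ) : ℝ :=
  d₁ * (∫ y in l₁..l₂, J₁ (x - y) * φ₁ y) - (d₁ + a) * φ₁ x + H0 * φ₂ x

/-- Second component of the linearized nonlocal operator L on [l₁, l₂]. -/
def opL2 (d₂ b G0 : ℝ) (J₂ : ℝ → ℝ) (l₁ l₂ : ℝ) (φ₁ φ₂ : ℝ → ℝ) (x : ℝ) : ℝ :=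
  d₂ * (∫ y in l₁..l₂, J₂ (x - y) * φ₂ y) - (d₂ + b) * φ₂ x + G0 * φ₁ x

/-- The principal eigenvalue λ_p(l₁,l₂): the infimum of all λ such that
L[φ] ≤ λφ on [l₁,l₂] for some continuous pair φ with both components positive. -/
def lamP (d₁ d₂ a b H0 G0 : ℝ) (J₁ J₂ : ℝ → ℝ) (l₁ l₂ : ℝ) : ℝ :=
  sInf {lam : ℝ | ∃ φ₁ φ₂ : ℝ → ℝ,
    ContinuousOn φ₁ (Icc l₁ l₂) ∧ ContinuousOn φ₂ (Icc l₁ l₂) ∧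
    (∀ x ∈ Icc l₁ l₂, 0 < φ₁ x ∧ 0 < φ₂ x) ∧
    (∀ x ∈ Icc l₁ l₂, opL1 d₁ a H0 J₁ l₁ l₂ φ₁ φ₂ x ≤ lam * φ₁ x ∧
      opL2 d₂ b G0 J₂ l₁ l₂ φ₁ φ₂ x ≤ lam * φ₂ x)}

/-- (U, V) solves the steady state system (2.4) on the half line [0,∞). -/
def SteadyHalf (d₁ d₂ a b : ℝ) (J₁ J₂ H G : ℝ → ℝ) (U V : ℝ → ℝ) : Prop :=
  ∀ x ∈ Ici (0:ℝ),
    d₁ * (∫ y in Ioi (0:ℝ), J₁ (x - y) * U y) - d₁ * U x - a * U x + H (V x) = 0 ∧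
    d₂ * (∫ y in Ioi (0:ℝ), J₂ (x - y) * V y) - d₂ * V x - b * V x + G (U x) = 0

/-- (U, V) is a bounded positive pair on the half line [0,∞). -/
def BddPosHalf (U V : ℝ → ℝ) : Prop :=
  (∀ x ∈ Ici (0:ℝ), 0 < U x ∧ 0 < V x) ∧ ∃ M : ℝ, ∀ x ∈ Ici (0:ℝ), U x ≤ M ∧ V x ≤ M

/-- (U, V) solves the steady state system (2.5) on [0, l]. -/
def SteadyFix (d₁ d₂ a b l : ℝ) (J₁ J₂ H G : ℝ → ℝ) (U V : ℝ → ℝ) : Prop :=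
  ∀ x ∈ Icc 0 l,
    d₁ * (∫ y in (0:ℝ)..l, J₁ (x - y) * U y) - d₁ * U x - a * U x + H (V x) = 0 ∧
    d₂ * (∫ y in (0:ℝ)..l, J₂ (x - y) * V y) - d₂ * V x - b * V x + G (U x) = 0

/-- (u, v) is a solution of the Cauchy problem (2.9) on [0, l] with initial data (w₀, z₀). -/
def IsSolFix (d₁ d₂ a b l : ℝ) (J₁ J₂ H G w₀ z₀ : ℝ → ℝ) (u v : ℝ → ℝ → ℝ) : Prop :=
  ContinuousOn (fun p : ℝ × ℝ => u p.1 p.2) (Ici 0 ×ˢ Icc 0 l) ∧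
  ContinuousOn (fun p : ℝ × ℝ => v p.1 p.2) (Ici 0 ×ˢ Icc 0 l) ∧
  (∀ t ∈ Ioi (0:ℝ), ∀ x ∈ Icc 0 l,
    HasDerivAt (fun s => u s x)
      (d₁ * (∫ y in (0:ℝ)..l, J₁ (x - y) * u t y) - d₁ * u t x - a * u t x + H (v t x)) t ∧
    HasDerivAt (fun s => v s x)
      (d₂ * (∫ y in (0:ℝ)..l, J₂ (x - y) * v t y) - d₂ * v t x - b * v t x + G (u t x)) t) ∧
  (∀ x ∈ Icc 0 l, u 0 x = w₀ x ∧ v 0 x = z₀ x)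

/-- (u, v) is a (locally-in-time bounded) solution of the Cauchy problem (2.10)
on the half line [0,∞) with initial data (w₀, z₀). -/
def IsSolHalf (d₁ d₂ a b : ℝ) (J₁ J₂ H G w₀ z₀ : ℝ → ℝ) (u v : ℝ → ℝ → ℝ) : Prop :=
  ContinuousOn (fun p : ℝ × ℝ => u p.1 p.2) (Ici 0 ×ˢ Ici 0) ∧
  ContinuousOn (fun p : ℝ × ℝ => v p.1 p.2) (Ici 0 ×ˢ Ici 0) ∧
  (∀ T > (0:ℝ), ∃ M : ℝ, ∀ t ∈ Icc 0 T, ∀ x ∈ Ici (0:ℝ), |u t x| ≤ M ∧ |v t x| ≤ M) ∧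
  (∀ t ∈ Ioi (0:ℝ), ∀ x ∈ Ici (0:ℝ),
    HasDerivAt (fun s => u s x)
      (d₁ * (∫ y in Ioi (0:ℝ), J₁ (x - y) * u t y) - d₁ * u t x - a * u t x + H (v t x)) t ∧
    HasDerivAt (fun s => v s x)
      (d₂ * (∫ y in Ioi (0:ℝ), J₂ (x - y) * v t y) - d₂ * v t x - b * v t x + G (u t x)) t) ∧
  (∀ x ∈ Ici (0:ℝ), u 0 x = w₀ x ∧ v 0 x = z₀ x)

set_option maxHeartbeats 1000000


lemma gamma_facts (A B c : ℝ) (hc : 0 < c) :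
    0 < (-A - B + Real.sqrt ((A-B)^2 + 4*c))/2 + A ∧
    0 < (-A - B + Real.sqrt ((A-B)^2 + 4*c))/2 + B ∧
    ((-A - B + Real.sqrt ((A-B)^2 + 4*c))/2 + A) *
      ((-A - B + Real.sqrt ((A-B)^2 + 4*c))/2 + B) = c := by
  have hs : Real.sqrt ((A-B)^2+4*c) ^ 2 = (A-B)^2+4*c := Real.sq_sqrt (by positivity)
  have habs : |A-B| < Real.sqrt ((A-B)^2+4*c) := by
    rw [← Real.sqrt_sq_eq_abs]
    exact Real.sqrt_lt_sqrt (sq_nonneg _) (by linarith)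
  have h1 := abs_lt.1 habs
  refine ⟨by linarith, by linarith, by nlinarith⟩

lemma gamma_ge (A B c lam : ℝ) (hc : 0 < c) (h1 : 0 < lam + A) (h2 : 0 < lam + B)
    (h : c ≤ (lam+A)*(lam+B)) : (-A - B + Real.sqrt ((A-B)^2 + 4*c))/2 ≤ lam := by
  have hs : Real.sqrt ((A-B)^2+4*c) ^ 2 = (A-B)^2+4*c := Real.sq_sqrt (by positivity)
  have hnn : 0 ≤ Real.sqrt ((A-B)^2+4*c) := Real.sqrt_nonneg _
  nlinarith [sq_nonneg (Real.sqrt ((A-B)^2+4*c) - (2*lam+A+B)),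
    sq_nonneg (Real.sqrt ((A-B)^2+4*c) + (2*lam+A+B))]


lemma kernel_int_le_one {J : ℝ → ℝ} (hJ : KernelCond J) {l₁ l₂ : ℝ} (hl : l₁ ≤ l₂) (x : ℝ) :
    ∫ y in l₁..l₂, J (x - y) ≤ 1 := by
  obtain ⟨hc, _, hnn, _, _, hint, htot⟩ := hJ
  rw [intervalIntegral.integral_comp_sub_left, intervalIntegral.integral_of_le (by linarith)]
  calc ∫ y in Ioc (x-l₂) (x-l₁), J y ≤ ∫ y, J y :=
        setIntegral_le_integral hint (.of_forall hnn)
    _ = 1 := htot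

lemma kernel_int_le_len {J : ℝ → ℝ} (hJc : Continuous J) {C : ℝ} (hC : ∀ x, J x ≤ C)
    {l₁ l₂ : ℝ} (hl : l₁ ≤ l₂) (x : ℝ) :
    ∫ y in l₁..l₂, J (x - y) ≤ C * (l₂ - l₁) := by
  have h := intervalIntegral.integral_mono_on (f := fun y => J (x - y)) (g := fun _ => C) hl
    ((hJc.comp (by continuity)).intervalIntegrable _ _) (intervalIntegrable_const (μ := volume))
    (fun y _ => hC _)
  simpa [mul_comm] using h

lemma kernel_int_nonneg {J : ℝ → ℝ} (hnn : ∀ x, 0 ≤ J x) {l₁ l₂ : ℝ} (hl : l₁ ≤ l₂)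
    {φ : ℝ → ℝ} (hφ : ∀ y ∈ Icc l₁ l₂, 0 ≤ φ y) (x : ℝ) :
    0 ≤ ∫ y in l₁..l₂, J (x - y) * φ y :=
  intervalIntegral.integral_nonneg hl (fun y hy => mul_nonneg (hnn _) (hφ y hy))


lemma sine_conv {J : ℝ → ℝ} (hJ : KernelCond J) {K l₁ l₂ : ℝ} (hK : 0 < K) (hl : l₁ < l₂)
    (hlen : 2*K ≤ l₂ - l₁) {x : ℝ} (hx : x ∈ Icc l₁ l₂) :
    (∫ z in (-K)..K, J z) * Real.cos (π*K/(l₂-l₁)) * Real.sin (π*(x-l₁)/(l₂-l₁)) ≤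
      ∫ y in l₁..l₂, J (x-y) * Real.sin (π*(y-l₁)/(l₂-l₁)) := by
  obtain ⟨hc, -, hnn, -, heven, hint, -⟩ := hJ
  set l := l₂ - l₁ with hldef
  have hlpos : 0 < l := by simp only [hldef]; linarith
  have hKl : K ≤ l := by linarith
  obtain ⟨hx1, hx2⟩ := hx
  -- continuity facts
  have hsc : Continuous fun y : ℝ => Real.sin (π*(y-l₁)/l) :=
    Real.continuous_sin.comp ((continuous_const.mul (continuous_id.sub continuous_const)).div_const l)
  have hsc2 : Continuous fun z : ℝ => Real.sin (π*(x-z-l₁)/l) :=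
    Real.continuous_sin.comp ((continuous_const.mul ((continuous_const.sub continuous_id).sub
      continuous_const)).div_const l)
  have hsc3 : Continuous fun z : ℝ => Real.sin (π*(x+z-l₁)/l) :=
    Real.continuous_sin.comp ((continuous_const.mul ((continuous_const.add continuous_id).sub
      continuous_const)).div_const l)
  have hcos : Continuous fun z : ℝ => Real.cos (π*z/l) :=
    Real.continuous_cos.comp ((continuous_const.mul continuous_id).div_const l)
  have hJx : Continuous fun y : ℝ => J (x - y) := hc.comp (continuous_const.sub continuous_id)
  have hJn : Continuous fun z : ℝ => J (-z) := hc.comp continuous_neg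
  have hii : ∀ a b : ℝ,
      IntervalIntegrable (fun y => J (x - y) * Real.sin (π*(y-l₁)/l)) volume a b :=
    fun a b => (hJx.mul hsc).intervalIntegrable a b
  -- sine sign facts
  have hsin_nonneg : ∀ y, l₁ ≤ y → y ≤ l₂ → 0 ≤ Real.sin (π*(y-l₁)/l) := by
    intro y h1 h2
    apply Real.sin_nonneg_of_nonneg_of_le_pi
    · apply div_nonneg _ hlpos.le
      nlinarith [Real.pi_pos]
    · rw [div_le_iff₀ hlpos]
      nlinarith [Real.pi_pos]
  have hsinθ : 0 ≤ Real.sin (π*(x-l₁)/l) := hsin_nonneg x hx1 hx2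
  have hsin_nonpos_left : ∀ y, l₁ - l ≤ y → y ≤ l₁ → Real.sin (π*(y-l₁)/l) ≤ 0 := by
    intro y h1 h2
    have h0 : 0 ≤ Real.sin (-(π*(y-l₁)/l)) := by
      apply Real.sin_nonneg_of_nonneg_of_le_pi
      · rw [neg_nonneg]
        apply div_nonpos_of_nonpos_of_nonneg _ hlpos.le
        nlinarith [Real.pi_pos]
      · rw [neg_le, le_div_iff₀ hlpos]
        nlinarith [Real.pi_pos]
    rw [Real.sin_neg] at h0
    linarith
  have hsin_nonpos_right : ∀ y, l₂ ≤ y → y ≤ l₂ + l → Real.sin (π*(y-l₁)/l) ≤ 0 := by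
    intro y h1 h2
    have h0 : 0 ≤ Real.sin (π*(y-l₁)/l - π) := by
      apply Real.sin_nonneg_of_nonneg_of_le_pi
      · rw [sub_nonneg, le_div_iff₀ hlpos]
        have hy : l ≤ y - l₁ := by simp only [hldef]; linarith
        nlinarith [Real.pi_pos]
      · rw [sub_le_iff_le_add, div_le_iff₀ hlpos]
        have hy : y - l₁ ≤ 2*l := by simp only [hldef]; linarith
        nlinarith [Real.pi_pos]
    rw [Real.sin_sub_pi] at h0
    linarith
  set f : ℝ → ℝ := fun y => J (x - y) * Real.sin (π*(y-l₁)/l) with hf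
  set a' := max l₁ (x-K) with ha'
  set b' := min l₂ (x+K) with hb'
  have hab1 : x - K ≤ a' := le_max_right _ _
  have hab2 : a' ≤ b' := le_trans (max_le hx1 (by linarith)) (le_min hx2 (by linarith))
  have hab3 : b' ≤ x + K := min_le_right _ _
  have step1 : (∫ y in a'..b', f y) ≤ ∫ y in l₁..l₂, f y := by
    apply intervalIntegral.integral_mono_interval (le_max_left _ _) hab2 (min_le_left _ _)
      _ (hii l₁ l₂)
    exact (ae_restrict_iff' measurableSet_Ioc).2
      (Eventually.of_forall fun y hy => mul_nonneg (hnn _) (hsin_nonneg y hy.1.le hy.2))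
  have e1 : (∫ y in (x-K)..a', f y) + ∫ y in a'..(x+K), f y = ∫ y in (x-K)..(x+K), f y :=
    intervalIntegral.integral_add_adjacent_intervals (hii _ _) (hii _ _)
  have e2 : (∫ y in a'..b', f y) + ∫ y in b'..(x+K), f y = ∫ y in a'..(x+K), f y :=
    intervalIntegral.integral_add_adjacent_intervals (hii _ _) (hii _ _)
  have left_nonpos : (∫ y in (x-K)..a', f y) ≤ 0 := by
    rcases le_or_gt l₁ (x-K) with h | h
    · rw [show a' = x-K from max_eq_right h, intervalIntegral.integral_same]
    · rw [show a' = l₁ from max_eq_left h.le]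
      have h0 : 0 ≤ ∫ y in (x-K)..l₁, -(f y) := by
        apply intervalIntegral.integral_nonneg (by linarith)
        intro y hy
        obtain ⟨hy1, hy2⟩ := hy
        rw [neg_nonneg]
        exact mul_nonpos_of_nonneg_of_nonpos (hnn _)
          (hsin_nonpos_left y (by linarith) (by linarith))
      rw [intervalIntegral.integral_neg] at h0
      linarith
  have right_nonpos : (∫ y in b'..(x+K), f y) ≤ 0 := by
    rcases le_or_gt (x+K) l₂ with h | h
    · rw [show b' = x+K from min_eq_right h, intervalIntegral.integral_same]
    · rw [show b' = l₂ from min_eq_left h.le]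
      have h0 : 0 ≤ ∫ y in l₂..(x+K), -(f y) := by
        apply intervalIntegral.integral_nonneg (by linarith)
        intro y hy
        obtain ⟨hy1, hy2⟩ := hy
        rw [neg_nonneg]
        exact mul_nonpos_of_nonneg_of_nonpos (hnn _)
          (hsin_nonpos_right y (by linarith) (by linarith))
      rw [intervalIntegral.integral_neg] at h0
      linarith
  have step2 : (∫ y in (x-K)..(x+K), f y) ≤ ∫ y in a'..b', f y := by linarith
  have step3 : (∫ y in (x-K)..(x+K), f y)
      = ∫ z in (-K)..K, J z * Real.sin (π*(x-z-l₁)/l) := by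
    have h := intervalIntegral.integral_comp_sub_left
      (fun z => J z * Real.sin (π*(x-z-l₁)/l)) x (a := x-K) (b := x+K)
    rw [show x-(x+K) = -K by ring, show x-(x-K) = K by ring] at h
    rw [← h]
    apply intervalIntegral.integral_congr
    intro y _
    simp only [hf, sub_sub_cancel]
  have hgii : ∀ a b : ℝ,
      IntervalIntegrable (fun z => J z * Real.sin (π*(x-z-l₁)/l)) volume a b :=
    fun a b => (hc.mul hsc2).intervalIntegrable a b
  have hgii2 : ∀ a b : ℝ,
      IntervalIntegrable (fun z => J (-z) * Real.sin (π*(x+z-l₁)/l)) volume a b :=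
    fun a b => (hJn.mul hsc3).intervalIntegrable a b
  have e3 : (∫ z in (-K)..(0:ℝ), J z * Real.sin (π*(x-z-l₁)/l))
      = ∫ z in (0:ℝ)..K, J (-z) * Real.sin (π*(x+z-l₁)/l) := by
    have h := intervalIntegral.integral_comp_neg
      (fun z => J z * Real.sin (π*(x-z-l₁)/l)) (a := 0) (b := K)
    rw [neg_zero] at h
    rw [← h]
    apply intervalIntegral.integral_congr
    intro z _
    simp only [sub_neg_eq_add]
  have e4 : (∫ z in (-K)..K, J z * Real.sin (π*(x-z-l₁)/l))
      = ∫ z in (0:ℝ)..K,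
          (J (-z) * Real.sin (π*(x+z-l₁)/l) + J z * Real.sin (π*(x-z-l₁)/l)) := by
    rw [← intervalIntegral.integral_add_adjacent_intervals (hgii (-K) 0) (hgii 0 K), e3,
      ← intervalIntegral.integral_add (hgii2 0 K) (hgii 0 K)]
  have e5 : (∫ z in (0:ℝ)..K,
        (J (-z) * Real.sin (π*(x+z-l₁)/l) + J z * Real.sin (π*(x-z-l₁)/l)))
      = ∫ z in (0:ℝ)..K, J z * (2 * Real.sin (π*(x-l₁)/l) * Real.cos (π*z/l)) := by
    apply intervalIntegral.integral_congr
    intro z _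
    simp only [heven]
    rw [show π*(x+z-l₁)/l = π*(x-l₁)/l + π*z/l by ring,
      show π*(x-z-l₁)/l = π*(x-l₁)/l - π*z/l by ring,
      Real.sin_add, Real.sin_sub]
    ring
  have step6 : (∫ z in (0:ℝ)..K, J z * (2 * Real.sin (π*(x-l₁)/l) * Real.cos (π*K/l)))
      ≤ ∫ z in (0:ℝ)..K, J z * (2 * Real.sin (π*(x-l₁)/l) * Real.cos (π*z/l)) := by
    apply intervalIntegral.integral_mono_on hK.le
      ((hc.mul continuous_const).intervalIntegrable 0 K)
      ((hc.mul (continuous_const.mul hcos)).intervalIntegrable 0 K)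
    intro z hz
    apply mul_le_mul_of_nonneg_left _ (hnn z)
    apply mul_le_mul_of_nonneg_left _ (by positivity)
    apply Real.cos_le_cos_of_nonneg_of_le_pi
    · apply div_nonneg _ hlpos.le
      nlinarith [Real.pi_pos, hz.1]
    · rw [div_le_iff₀ hlpos]
      nlinarith [Real.pi_pos]
    · rw [div_le_div_iff₀ hlpos hlpos]
      nlinarith [mul_nonneg (mul_nonneg Real.pi_pos.le (sub_nonneg.2 hz.2)) hlpos.le]
  have step7 : (∫ z in (0:ℝ)..K, J z * (2 * Real.sin (π*(x-l₁)/l) * Real.cos (π*K/l)))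
      = (∫ z in (0:ℝ)..K, J z) * (2 * Real.sin (π*(x-l₁)/l) * Real.cos (π*K/l)) :=
    intervalIntegral.integral_mul_const _ _
  have step8 : (∫ z in (-K)..K, J z) = 2 * ∫ z in (0:ℝ)..K, J z := by
    have h := intervalIntegral.integral_comp_neg J (a := 0) (b := K)
    rw [neg_zero] at h
    have h2 : (∫ z in (0:ℝ)..K, J (-z)) = ∫ z in (0:ℝ)..K, J z := by
      apply intervalIntegral.integral_congr
      intro z _
      exact heven z
    rw [← intervalIntegral.integral_add_adjacent_intervals
      (hc.intervalIntegrable (-K) 0) (hc.intervalIntegrable 0 K), ← h, h2]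
    ring
  calc (∫ z in (-K)..K, J z) * Real.cos (π*K/l) * Real.sin (π*(x-l₁)/l)
      = (∫ z in (0:ℝ)..K, J z) * (2 * Real.sin (π*(x-l₁)/l) * Real.cos (π*K/l)) := by
        rw [step8]; ring
    _ ≤ ∫ z in (0:ℝ)..K, J z * (2 * Real.sin (π*(x-l₁)/l) * Real.cos (π*z/l)) := by
        rw [← step7]; exact step6
    _ = ∫ z in (-K)..K, J z * Real.sin (π*(x-z-l₁)/l) := by rw [e4, e5]
    _ = ∫ y in (x-K)..(x+K), f y := step3.symm
    _ ≤ ∫ y in a'..b', f y := step2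
    _ ≤ ∫ y in l₁..l₂, f y := step1

def Sset (d₁ d₂ a b H0 G0 : ℝ) (J₁ J₂ : ℝ → ℝ) (l₁ l₂ : ℝ) : Set ℝ :=
  {lam : ℝ | ∃ φ₁ φ₂ : ℝ → ℝ,
    ContinuousOn φ₁ (Icc l₁ l₂) ∧ ContinuousOn φ₂ (Icc l₁ l₂) ∧
    (∀ x ∈ Icc l₁ l₂, 0 < φ₁ x ∧ 0 < φ₂ x) ∧
    (∀ x ∈ Icc l₁ l₂, opL1 d₁ a H0 J₁ l₁ l₂ φ₁ φ₂ x ≤ lam * φ₁ x ∧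
      opL2 d₂ b G0 J₂ l₁ l₂ φ₁ φ₂ x ≤ lam * φ₂ x)}

section main
variable {d₁ d₂ a b H0 G0 : ℝ} {J₁ J₂ : ℝ → ℝ}

/-- Lower bound: every element of the admissible set is at least γ_B. -/
lemma lower_B (hd₁ : 0 < d₁) (hd₂ : 0 < d₂) (ha : 0 < a) (hb : 0 < b)
    (hJ₁ : KernelCond J₁) (hJ₂ : KernelCond J₂) (hH0 : 0 < H0) (hG0 : 0 < G0)
    {l₁ l₂ : ℝ} (hl : l₁ < l₂) {lam : ℝ} (hlam : lam ∈ Sset d₁ d₂ a b H0 G0 J₁ J₂ l₁ l₂) :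
    (-a - d₁ - b - d₂ + Real.sqrt ((a + d₁ - b - d₂) ^ 2 + 4 * H0 * G0)) / 2 ≤ lam := by
  obtain ⟨φ₁, φ₂, hφ₁, hφ₂, hpos, hineq⟩ := hlam
  have hmem : l₁ ∈ Icc l₁ l₂ := ⟨le_refl _, hl.le⟩
  obtain ⟨hp1, hp2⟩ := hpos l₁ hmem
  obtain ⟨h1, h2⟩ := hineq l₁ hmem
  rw [opL1] at h1
  rw [opL2] at h2
  have hI₁ : 0 ≤ ∫ y in l₁..l₂, J₁ (l₁ - y) * φ₁ y :=
    intervalIntegral.integral_nonneg hl.le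
      (fun y hy => mul_nonneg (hJ₁.2.2.1 _) (hpos y hy).1.le)
  have hI₂ : 0 ≤ ∫ y in l₁..l₂, J₂ (l₁ - y) * φ₂ y :=
    intervalIntegral.integral_nonneg hl.le
      (fun y hy => mul_nonneg (hJ₂.2.2.1 _) (hpos y hy).2.le)
  have k1 : H0 * φ₂ l₁ ≤ (lam + (a + d₁)) * φ₁ l₁ := by nlinarith
  have k2 : G0 * φ₁ l₁ ≤ (lam + (b + d₂)) * φ₂ l₁ := by nlinarith
  have hpA : 0 < lam + (a + d₁) := by nlinarith
  have hpB : 0 < lam + (b + d₂) := by nlinarith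
  have hprod : H0 * G0 ≤ (lam + (a + d₁)) * (lam + (b + d₂)) := by
    have := mul_le_mul k1 k2 (by positivity) (by positivity)
    nlinarith
  have := gamma_ge (a + d₁) (b + d₂) (H0 * G0) lam (by positivity) hpA hpB hprod
  have harg : ((a + d₁) - (b + d₂)) ^ 2 + 4 * (H0 * G0)
      = (a + d₁ - b - d₂) ^ 2 + 4 * H0 * G0 := by ring
  rw [harg] at this
  linarith

/-- γ_A belongs to the admissible set (constant supersolution). -/
lemma mem_A (hd₁ : 0 < d₁) (hd₂ : 0 < d₂) (ha : 0 < a) (hb : 0 < b)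
    (hJ₁ : KernelCond J₁) (hJ₂ : KernelCond J₂) (hH0 : 0 < H0) (hG0 : 0 < G0)
    {l₁ l₂ : ℝ} (hl : l₁ < l₂) :
    (-a - b + Real.sqrt ((a - b) ^ 2 + 4 * H0 * G0)) / 2
      ∈ Sset d₁ d₂ a b H0 G0 J₁ J₂ l₁ l₂ := by
  have harg : (a - b) ^ 2 + 4 * (H0 * G0) = (a - b) ^ 2 + 4 * H0 * G0 := by ring
  obtain ⟨hA1, hA2, heig⟩ := gamma_facts a b (H0 * G0) (by positivity)
  rw [harg] at hA1 hA2 heig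
  set gA := (-a - b + Real.sqrt ((a - b) ^ 2 + 4 * H0 * G0)) / 2 with hgA
  refine ⟨fun _ => H0, fun _ => gA + a, continuousOn_const, continuousOn_const,
    fun x _ => ⟨hH0, by beta_reduce; linarith⟩, fun x hx => ⟨?_, ?_⟩⟩
  · rw [opL1]
    have hint : (∫ y in l₁..l₂, J₁ (x - y) * H0) ≤ H0 := by
      rw [intervalIntegral.integral_mul_const]
      nlinarith [kernel_int_le_one hJ₁ hl.le x,
        intervalIntegral.integral_nonneg (μ := volume) hl.le (fun y (_ : y ∈ Icc l₁ l₂) => hJ₁.2.2.1 (x - y))]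
    beta_reduce
    nlinarith [mul_le_mul_of_nonneg_left hint hd₁.le]
  · rw [opL2]
    have hint : (∫ y in l₁..l₂, J₂ (x - y) * (gA + a)) ≤ gA + a := by
      rw [intervalIntegral.integral_mul_const]
      nlinarith [kernel_int_le_one hJ₂ hl.le x,
        intervalIntegral.integral_nonneg (μ := volume) hl.le (fun y (_ : y ∈ Icc l₁ l₂) => hJ₂.2.2.1 (x - y))]
    beta_reduce
    nlinarith [mul_le_mul_of_nonneg_left hint hd₂.le]

/-- Near-γ_B constants give elements of the admissible set for short intervals. -/
lemma mem_B (hd₁ : 0 < d₁) (hd₂ : 0 < d₂) (ha : 0 < a) (hb : 0 < b)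
    (hJ₁ : KernelCond J₁) (hJ₂ : KernelCond J₂) (hH0 : 0 < H0) (hG0 : 0 < G0)
    {C₁ C₂ : ℝ} (hC₁ : ∀ x, J₁ x ≤ C₁) (hC₂ : ∀ x, J₂ x ≤ C₂)
    {l₁ l₂ : ℝ} (hl : l₁ < l₂) :
    (-a - d₁ - b - d₂ + Real.sqrt ((a + d₁ - b - d₂) ^ 2 + 4 * H0 * G0)) / 2
      + (max (d₁ * C₁) (d₂ * C₂)) * (l₂ - l₁)
      ∈ Sset d₁ d₂ a b H0 G0 J₁ J₂ l₁ l₂ := by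
  have harg : ((a + d₁) - (b + d₂)) ^ 2 + 4 * (H0 * G0)
      = (a + d₁ - b - d₂) ^ 2 + 4 * H0 * G0 := by ring
  obtain ⟨hB1, hB2, heig⟩ := gamma_facts (a + d₁) (b + d₂) (H0 * G0) (by positivity)
  rw [harg] at hB1 hB2 heig
  have hgB : (-(a + d₁) - (b + d₂) + Real.sqrt ((a + d₁ - b - d₂) ^ 2 + 4 * H0 * G0)) / 2
      = (-a - d₁ - b - d₂ + Real.sqrt ((a + d₁ - b - d₂) ^ 2 + 4 * H0 * G0)) / 2 := by ring
  rw [hgB] at hB1 hB2 heig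
  set gB := (-a - d₁ - b - d₂ + Real.sqrt ((a + d₁ - b - d₂) ^ 2 + 4 * H0 * G0)) / 2 with hgBdef
  set M := max (d₁ * C₁) (d₂ * C₂) with hM
  have hM1 : d₁ * C₁ ≤ M := le_max_left _ _
  have hM2 : d₂ * C₂ ≤ M := le_max_right _ _
  refine ⟨fun _ => H0, fun _ => gB + (a + d₁), continuousOn_const, continuousOn_const,
    fun x _ => ⟨hH0, by beta_reduce; linarith⟩, fun x hx => ⟨?_, ?_⟩⟩
  · rw [opL1]
    have hint : (∫ y in l₁..l₂, J₁ (x - y) * H0) ≤ C₁ * (l₂ - l₁) * H0 := by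
      rw [intervalIntegral.integral_mul_const]
      nlinarith [kernel_int_le_len hJ₁.1 hC₁ hl.le x]
    beta_reduce
    nlinarith [mul_le_mul_of_nonneg_left hint hd₁.le,
      mul_le_mul_of_nonneg_right hM1 (mul_nonneg (by linarith : (0:ℝ) ≤ l₂ - l₁) hH0.le)]
  · rw [opL2]
    have hint : (∫ y in l₁..l₂, J₂ (x - y) * (gB + (a + d₁)))
        ≤ C₂ * (l₂ - l₁) * (gB + (a + d₁)) := by
      rw [intervalIntegral.integral_mul_const]
      nlinarith [kernel_int_le_len hJ₂.1 hC₂ hl.le x]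
    beta_reduce
    nlinarith [mul_le_mul_of_nonneg_left hint hd₂.le,
      mul_le_mul_of_nonneg_right hM2 (mul_nonneg (by linarith : (0:ℝ) ≤ l₂ - l₁) hB1.le)]

end main

/-- Lower bound via sine subsolution and touching argument. -/
lemma lower_A (hd₁ : 0 < d₁) (hd₂ : 0 < d₂) (ha : 0 < a) (hb : 0 < b)
    (hJ₁ : KernelCond J₁) (hJ₂ : KernelCond J₂) (hH0 : 0 < H0) (hG0 : 0 < G0)
    {l₁ l₂ ε c₁ c₂ : ℝ} (hl : l₁ < l₂)
    (hc₁ : ∀ x ∈ Icc l₁ l₂, c₁ * Real.sin (π*(x-l₁)/(l₂-l₁))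
      ≤ ∫ y in l₁..l₂, J₁ (x-y) * Real.sin (π*(y-l₁)/(l₂-l₁)))
    (hc₂ : ∀ x ∈ Icc l₁ l₂, c₂ * Real.sin (π*(x-l₁)/(l₂-l₁))
      ≤ ∫ y in l₁..l₂, J₂ (x-y) * Real.sin (π*(y-l₁)/(l₂-l₁)))
    (he₁ : d₁*(1-c₁) ≤ ε) (he₂ : d₂*(1-c₂) ≤ ε)
    {lam : ℝ} (hlam : lam ∈ Sset d₁ d₂ a b H0 G0 J₁ J₂ l₁ l₂) :
    (-a - b + Real.sqrt ((a - b) ^ 2 + 4 * H0 * G0)) / 2 - ε ≤ lam := by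
  obtain ⟨φ₁, φ₂, hφ₁, hφ₂, hpos, hineq⟩ := hlam
  have harg : (a - b) ^ 2 + 4 * (H0 * G0) = (a - b) ^ 2 + 4 * H0 * G0 := by ring
  obtain ⟨hA1, hA2, heig⟩ := gamma_facts a b (H0 * G0) (by positivity)
  rw [harg] at hA1 hA2 heig
  set gA := (-a - b + Real.sqrt ((a - b) ^ 2 + 4 * H0 * G0)) / 2 with hgA
  set l := l₂ - l₁ with hldef
  have hlpos : 0 < l := by simp only [hldef]; linarith
  set η : ℝ → ℝ := fun x => Real.sin (π*(x-l₁)/l) with hη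
  have hηcont : Continuous η :=
    Real.continuous_sin.comp
      ((continuous_const.mul (continuous_id.sub continuous_const)).div_const l)
  have hηnonneg : ∀ x ∈ Icc l₁ l₂, 0 ≤ η x := by
    intro y hy
    apply Real.sin_nonneg_of_nonneg_of_le_pi
    · apply div_nonneg _ hlpos.le
      nlinarith [Real.pi_pos, hy.1]
    · rw [div_le_iff₀ hlpos]
      nlinarith [Real.pi_pos, hy.2]
  -- ratio functions
  set r₁ : ℝ → ℝ := fun x => H0 * η x / φ₁ x with hr₁
  set r₂ : ℝ → ℝ := fun x => (gA + a) * η x / φ₂ x with hr₂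
  have hr₁cont : ContinuousOn r₁ (Icc l₁ l₂) :=
    ((continuous_const.mul hηcont).continuousOn).div hφ₁ (fun x hx => (hpos x hx).1.ne')
  have hr₂cont : ContinuousOn r₂ (Icc l₁ l₂) :=
    ((continuous_const.mul hηcont).continuousOn).div hφ₂ (fun x hx => (hpos x hx).2.ne')
  obtain ⟨x₁, hx₁, hmax₁'⟩ := isCompact_Icc.exists_isMaxOn (nonempty_Icc.2 hl.le) hr₁cont
  obtain ⟨x₂, hx₂, hmax₂'⟩ := isCompact_Icc.exists_isMaxOn (nonempty_Icc.2 hl.le) hr₂cont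
  have hmax₁ : ∀ y ∈ Icc l₁ l₂, r₁ y ≤ r₁ x₁ := fun y hy => hmax₁' hy
  have hmax₂ : ∀ y ∈ Icc l₁ l₂, r₂ y ≤ r₂ x₂ := fun y hy => hmax₂' hy
  set t := max (r₁ x₁) (r₂ x₂) with ht
  have hmid : (l₁+l₂)/2 ∈ Icc l₁ l₂ := ⟨by linarith, by linarith⟩
  have hηmid : 0 < η ((l₁+l₂)/2) := by
    apply Real.sin_pos_of_pos_of_lt_pi
    · apply div_pos _ hlpos
      nlinarith [Real.pi_pos]
    · rw [div_lt_iff₀ hlpos]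
      nlinarith [Real.pi_pos]
  have htpos : 0 < t := by
    have h1 : 0 < r₁ ((l₁+l₂)/2) :=
      div_pos (mul_pos hH0 hηmid) (hpos _ hmid).1
    have h2 := hmax₁ _ hmid
    exact lt_of_lt_of_le h1 (le_trans h2 (le_max_left _ _))
  -- the two pointwise comparison bounds
  have hcomp₁ : ∀ y ∈ Icc l₁ l₂, H0 * η y ≤ t * φ₁ y := by
    intro y hy
    have h := le_trans (hmax₁ y hy) (le_max_left (r₁ x₁) (r₂ x₂))
    rw [hr₁] at h
    have := (div_le_iff₀ (hpos y hy).1).1 h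
    linarith [this]
  have hcomp₂ : ∀ y ∈ Icc l₁ l₂, (gA + a) * η y ≤ t * φ₂ y := by
    intro y hy
    have h := le_trans (hmax₂ y hy) (le_max_right (r₁ x₁) (r₂ x₂))
    rw [hr₂] at h
    have := (div_le_iff₀ (hpos y hy).2).1 h
    linarith [this]
  rcases le_total (r₂ x₂) (r₁ x₁) with hcase | hcase
  · -- touching in the first component at x₁
    have hteq : t = r₁ x₁ := max_eq_left hcase
    have htouch : H0 * η x₁ = t * φ₁ x₁ := by
      rw [hteq, hr₁]
      exact (div_mul_cancel₀ _ (hpos x₁ hx₁).1.ne').symm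
    obtain ⟨h1, -⟩ := hineq x₁ hx₁
    rw [opL1] at h1
    -- integral comparison
    have hmono : (∫ y in l₁..l₂, H0 * (J₁ (x₁-y) * η y))
        ≤ ∫ y in l₁..l₂, t * (J₁ (x₁-y) * φ₁ y) := by
      apply intervalIntegral.integral_mono_on hl.le
      · exact (continuous_const.mul ((hJ₁.1.comp
          (continuous_const.sub continuous_id)).mul hηcont)).intervalIntegrable _ _
      · apply ContinuousOn.intervalIntegrable
        rw [uIcc_of_le hl.le]
        exact continuousOn_const.mul (((hJ₁.1.comp
          (continuous_const.sub continuous_id)).continuousOn).mul hφ₁)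
      · intro y hy
        have := mul_le_mul_of_nonneg_left (hcomp₁ y hy) (hJ₁.2.2.1 (x₁ - y))
        nlinarith [this]
    rw [intervalIntegral.integral_const_mul, intervalIntegral.integral_const_mul] at hmono
    have hA := hc₁ x₁ hx₁
    have hη₀pos : 0 < η x₁ := by nlinarith [(hpos x₁ hx₁).1]
    -- assemble
    have m1 := mul_le_mul_of_nonneg_left h1 htpos.le
    have m2 := mul_le_mul_of_nonneg_left hmono hd₁.le
    have m3 := mul_le_mul_of_nonneg_left hA (mul_pos hd₁ hH0).le
    have m5 := mul_le_mul_of_nonneg_left (hcomp₂ x₁ hx₁) hH0.le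
    have m4 : lam * (H0 * η x₁) = lam * (t * φ₁ x₁) := by rw [htouch]
    have m6 := mul_le_mul_of_nonneg_right he₁ (mul_pos hH0 hη₀pos).le
    have m7 : (d₁ + a) * (H0 * η x₁) = (d₁ + a) * (t * φ₁ x₁) := by rw [htouch]
    nlinarith [m1, m2, m3, m4, m5, m6, m7, mul_pos hH0 hη₀pos]
  · -- touching in the second component at x₂
    have hteq : t = r₂ x₂ := max_eq_right hcase
    have htouch : (gA + a) * η x₂ = t * φ₂ x₂ := by
      rw [hteq, hr₂]
      exact (div_mul_cancel₀ _ (hpos x₂ hx₂).2.ne').symm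
    obtain ⟨-, h2⟩ := hineq x₂ hx₂
    rw [opL2] at h2
    have hmono : (∫ y in l₁..l₂, (gA + a) * (J₂ (x₂-y) * η y))
        ≤ ∫ y in l₁..l₂, t * (J₂ (x₂-y) * φ₂ y) := by
      apply intervalIntegral.integral_mono_on hl.le
      · exact (continuous_const.mul ((hJ₂.1.comp
          (continuous_const.sub continuous_id)).mul hηcont)).intervalIntegrable _ _
      · apply ContinuousOn.intervalIntegrable
        rw [uIcc_of_le hl.le]
        exact continuousOn_const.mul (((hJ₂.1.comp
          (continuous_const.sub continuous_id)).continuousOn).mul hφ₂)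
      · intro y hy
        have := mul_le_mul_of_nonneg_left (hcomp₂ y hy) (hJ₂.2.2.1 (x₂ - y))
        nlinarith [this]
    rw [intervalIntegral.integral_const_mul, intervalIntegral.integral_const_mul] at hmono
    have hA' := hc₂ x₂ hx₂
    have hη₀pos : 0 < η x₂ := by nlinarith [(hpos x₂ hx₂).2]
    have m1 := mul_le_mul_of_nonneg_left h2 htpos.le
    have m2 := mul_le_mul_of_nonneg_left hmono hd₂.le
    have m3 := mul_le_mul_of_nonneg_left hA' (mul_pos hd₂ hA1).le
    have m5 := mul_le_mul_of_nonneg_left (hcomp₁ x₂ hx₂) hG0.le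
    have m4 : lam * ((gA + a) * η x₂) = lam * (t * φ₂ x₂) := by rw [htouch]
    have m6 := mul_le_mul_of_nonneg_right he₂ (mul_pos hA1 hη₀pos).le
    have m7 : (d₂ + b) * ((gA + a) * η x₂) = (d₂ + b) * (t * φ₂ x₂) := by rw [htouch]
    have m9 : G0 * (H0 * η x₂) = ((gA + a) * (gA + b)) * η x₂ := by
      rw [heig]; ring
    nlinarith [m1, m2, m3, m4, m5, m6, m7, m9, mul_pos hA1 hη₀pos]


theorem statement16
    (d₁ d₂ a b : ℝ) (J₁ J₂ H G : ℝ → ℝ)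
    (hd₁ : 0 < d₁) (hd₂ : 0 < d₂) (ha : 0 < a) (hb : 0 < b)
    (hJ₁ : KernelCond J₁) (hJ₂ : KernelCond J₂) (hHG : ReactionCond a b H G)
    (H0 G0 : ℝ) (hH0 : H0 = derivWithin H (Ici 0) 0) (hG0 : G0 = derivWithin G (Ici 0) 0) :
    (∀ ε > (0:ℝ), ∃ L : ℝ, ∀ l₁ l₂ : ℝ, l₁ < l₂ → L ≤ l₂ - l₁ →
      |lamP d₁ d₂ a b H0 G0 J₁ J₂ l₁ l₂ -
        (-a - b + Real.sqrt ((a - b) ^ 2 + 4 * H0 * G0)) / 2| < ε) ∧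
    (∀ ε > (0:ℝ), ∃ δ > (0:ℝ), ∀ l₁ l₂ : ℝ, l₁ < l₂ → l₂ - l₁ < δ →
      |lamP d₁ d₂ a b H0 G0 J₁ J₂ l₁ l₂ -
        (-a - d₁ - b - d₂ + Real.sqrt ((a + d₁ - b - d₂) ^ 2 + 4 * H0 * G0)) / 2| < ε) ∧
    (∀ l₁ l₂ : ℝ, l₁ < l₂ →
      (-a - d₁ - b - d₂ + Real.sqrt ((a + d₁ - b - d₂) ^ 2 + 4 * H0 * G0)) / 2 ≤
        lamP d₁ d₂ a b H0 G0 J₁ J₂ l₁ l₂ ∧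
      lamP d₁ d₂ a b H0 G0 J₁ J₂ l₁ l₂ ≤
        (-a - b + Real.sqrt ((a - b) ^ 2 + 4 * H0 * G0)) / 2) := by
  have hH0pos : 0 < H0 := by rw [hH0]; exact hHG.2.2.2.2.1 0 Set.self_mem_Ici
  have hG0pos : 0 < G0 := by rw [hG0]; exact hHG.2.2.2.2.2.1 0 Set.self_mem_Ici
  obtain ⟨C₁, hC₁⟩ := hJ₁.2.1
  obtain ⟨C₂, hC₂⟩ := hJ₂.2.1
  have hC₁pos : 0 < C₁ := lt_of_lt_of_le hJ₁.2.2.2.1 (hC₁ 0)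
  have hC₂pos : 0 < C₂ := lt_of_lt_of_le hJ₂.2.2.2.1 (hC₂ 0)
  set gA := (-a - b + Real.sqrt ((a - b) ^ 2 + 4 * H0 * G0)) / 2 with hgA
  set gB := (-a - d₁ - b - d₂ + Real.sqrt ((a + d₁ - b - d₂) ^ 2 + 4 * H0 * G0)) / 2 with hgB
  have hlamP : ∀ l₁ l₂ : ℝ, lamP d₁ d₂ a b H0 G0 J₁ J₂ l₁ l₂
      = sInf (Sset d₁ d₂ a b H0 G0 J₁ J₂ l₁ l₂) := fun _ _ => rfl
  have hAmem : ∀ l₁ l₂ : ℝ, l₁ < l₂ → gA ∈ Sset d₁ d₂ a b H0 G0 J₁ J₂ l₁ l₂ :=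
    fun l₁ l₂ hl => mem_A hd₁ hd₂ ha hb hJ₁ hJ₂ hH0pos hG0pos hl
  have hlow : ∀ l₁ l₂ : ℝ, l₁ < l₂ → ∀ lam ∈ Sset d₁ d₂ a b H0 G0 J₁ J₂ l₁ l₂, gB ≤ lam :=
    fun l₁ l₂ hl lam hm => lower_B hd₁ hd₂ ha hb hJ₁ hJ₂ hH0pos hG0pos hl hm
  have hbdd : ∀ l₁ l₂ : ℝ, l₁ < l₂ → BddBelow (Sset d₁ d₂ a b H0 G0 J₁ J₂ l₁ l₂) :=
    fun l₁ l₂ hl => ⟨gB, fun lam hm => hlow l₁ l₂ hl lam hm⟩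
  have hne : ∀ l₁ l₂ : ℝ, l₁ < l₂ → (Sset d₁ d₂ a b H0 G0 J₁ J₂ l₁ l₂).Nonempty :=
    fun l₁ l₂ hl => ⟨gA, hAmem l₁ l₂ hl⟩
  have part3 : ∀ l₁ l₂ : ℝ, l₁ < l₂ →
      gB ≤ lamP d₁ d₂ a b H0 G0 J₁ J₂ l₁ l₂ ∧ lamP d₁ d₂ a b H0 G0 J₁ J₂ l₁ l₂ ≤ gA := by
    intro l₁ l₂ hl
    rw [hlamP]
    exact ⟨le_csInf (hne l₁ l₂ hl) (hlow l₁ l₂ hl), csInf_le (hbdd l₁ l₂ hl) (hAmem l₁ l₂ hl)⟩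
  refine ⟨?_, ?_, part3⟩
  · -- limit as l₂ - l₁ → ∞
    intro ε hε
    set D := d₁ + d₂ + 1 with hD
    have hDpos : 0 < D := by positivity
    set ε₁ := min (ε/(4*D)) (1/2) with hε₁
    have hε₁pos : 0 < ε₁ := lt_min (by positivity) (by norm_num)
    have hε₁half : ε₁ ≤ 1/2 := min_le_right _ _
    have hε₁D : ε₁ * (4*D) ≤ ε := by
      rw [← le_div_iff₀ (by positivity)]
      exact min_le_left _ _
    -- choose K
    have ht₁ : Tendsto (fun K : ℝ => ∫ z in (-K)..K, J₁ z) atTop (𝓝 1) := by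
      have := MeasureTheory.intervalIntegral_tendsto_integral (μ := volume)
        hJ₁.2.2.2.2.2.1 (tendsto_neg_atTop_atBot) tendsto_id
      rwa [hJ₁.2.2.2.2.2.2] at this
    have ht₂ : Tendsto (fun K : ℝ => ∫ z in (-K)..K, J₂ z) atTop (𝓝 1) := by
      have := MeasureTheory.intervalIntegral_tendsto_integral (μ := volume)
        hJ₂.2.2.2.2.2.1 (tendsto_neg_atTop_atBot) tendsto_id
      rwa [hJ₂.2.2.2.2.2.2] at this
    obtain ⟨K, ⟨hK₁, hK₂⟩, hK0⟩ :=
      (((ht₁.eventually (eventually_ge_nhds (show 1 - ε₁ < 1 by linarith))).and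
        (ht₂.eventually (eventually_ge_nhds (show 1 - ε₁ < 1 by linarith)))).and
        (eventually_gt_atTop 0)).exists
    have hs2 : 0 < Real.sqrt (2*ε₁) := Real.sqrt_pos.2 (by linarith)
    refine ⟨max (2*K) (π*K/Real.sqrt (2*ε₁)), ?_⟩
    intro l₁ l₂ hl hlen
    have hlpos : 0 < l₂ - l₁ := by linarith
    have h2K : 2*K ≤ l₂ - l₁ := le_trans (le_max_left _ _) hlen
    have hcosK : 1 - ε₁ ≤ Real.cos (π*K/(l₂-l₁)) := by
      have h0 : π*K/Real.sqrt (2*ε₁) ≤ l₂-l₁ := le_trans (le_max_right _ _) hlen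
      rw [div_le_iff₀ hs2] at h0
      have h1 : π*K/(l₂-l₁) ≤ Real.sqrt (2*ε₁) := by
        rw [div_le_iff₀ hlpos]
        nlinarith
      have h1' : 0 ≤ π*K/(l₂-l₁) := by positivity
      have h2 : (π*K/(l₂-l₁))^2 ≤ 2*ε₁ := by
        have := pow_le_pow_left₀ h1' h1 2
        rwa [Real.sq_sqrt (by linarith : (0:ℝ) ≤ 2*ε₁)] at this
      have := Real.one_sub_sq_div_two_le_cos (x := π*K/(l₂-l₁))
      linarith
    have hcosK0 : 0 ≤ Real.cos (π*K/(l₂-l₁)) := by linarith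
    have hm₁0 : 0 ≤ ∫ z in (-K)..K, J₁ z :=
      intervalIntegral.integral_nonneg (by linarith) (fun z _ => hJ₁.2.2.1 z)
    have hm₂0 : 0 ≤ ∫ z in (-K)..K, J₂ z :=
      intervalIntegral.integral_nonneg (by linarith) (fun z _ => hJ₂.2.2.1 z)
    set c₁ := (∫ z in (-K)..K, J₁ z) * Real.cos (π*K/(l₂-l₁)) with hc₁def
    set c₂ := (∫ z in (-K)..K, J₂ z) * Real.cos (π*K/(l₂-l₁)) with hc₂def
    have hc₁ge : (1-ε₁)*(1-ε₁) ≤ c₁ :=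
      mul_le_mul hK₁ hcosK (by linarith) hm₁0
    have hc₂ge : (1-ε₁)*(1-ε₁) ≤ c₂ :=
      mul_le_mul hK₂ hcosK (by linarith) hm₂0
    have he₁ : d₁*(1-c₁) ≤ ε/2 := by
      nlinarith [mul_nonneg (show (0:ℝ) ≤ D - d₁ by simp [hD]; linarith) hε₁pos.le,
        mul_nonneg hd₁.le (mul_nonneg hε₁pos.le hε₁pos.le)]
    have he₂ : d₂*(1-c₂) ≤ ε/2 := by
      nlinarith [mul_nonneg (show (0:ℝ) ≤ D - d₂ by simp [hD]; linarith) hε₁pos.le,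
        mul_nonneg hd₂.le (mul_nonneg hε₁pos.le hε₁pos.le)]
    have hlower : gA - ε/2 ≤ lamP d₁ d₂ a b H0 G0 J₁ J₂ l₁ l₂ := by
      rw [hlamP]
      apply le_csInf (hne l₁ l₂ hl)
      intro lam hm
      exact lower_A hd₁ hd₂ ha hb hJ₁ hJ₂ hH0pos hG0pos hl
        (fun x hx => sine_conv hJ₁ hK0 hl h2K hx)
        (fun x hx => sine_conv hJ₂ hK0 hl h2K hx) he₁ he₂ hm
    have hupper := (part3 l₁ l₂ hl).2
    rw [abs_lt]
    constructor <;> linarith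
  · -- limit as l₂ - l₁ → 0
    intro ε hε
    set M := max (d₁ * C₁) (d₂ * C₂) with hM
    have hMpos : 0 < M := lt_max_of_lt_left (mul_pos hd₁ hC₁pos)
    refine ⟨ε/(M+1), by positivity, ?_⟩
    intro l₁ l₂ hl hlen
    have hup : lamP d₁ d₂ a b H0 G0 J₁ J₂ l₁ l₂ ≤ gB + M * (l₂ - l₁) := by
      rw [hlamP]
      exact csInf_le (hbdd l₁ l₂ hl) (mem_B hd₁ hd₂ ha hb hJ₁ hJ₂ hH0pos hG0pos hC₁ hC₂ hl)
    have hlo := (part3 l₁ l₂ hl).1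
    have hkey : M * (l₂ - l₁) < ε := by
      have h1 : M * (l₂ - l₁) < M * (ε/(M+1)) := mul_lt_mul_of_pos_left hlen hMpos
      have h2 : M * (ε/(M+1)) < ε := by
        rw [mul_comm, div_mul_eq_mul_div, div_lt_iff₀ (by positivity)]
        nlinarith
      linarith
    rw [abs_lt]
    constructor <;> linarith
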